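/- arXiv:1809.02015 — 2 statements merged into one kernel-verified Lean document; each statement's English description precedes it below -/
import Mathlib

section
/- Let 0 ≤ β < 1/2 and γ > 0 with γ + β > 1/2. Suppose v : (0,1) → ℝ is measurable and M ≥ 0 satisfies ∫_t^1 (s−t)^{−2β} |v(s)|² ds ≤ M² for every t ∈ (0,1). Then for every t ∈ (0,1), |(I_{1-}^γ v)(t)| ≤ (Γ(γ)·√(2γ+2β−1))^{-1} · (1−t)^{γ+β−1/2} · M; in particular (I_{1-}^γ v)(t) → 0 as t → 1−. -/
open MeasureTheory

/-- Right Riemann–Liouville fractional integral on `(0,1)`: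
`(I_{1-}^γ v)(t) = (1/Γ(γ)) ∫_t^1 (s-t)^(γ-1) v(s) ds`. -/
noncomputable def rightFracInt (γ : ℝ) (v : ℝ → ℝ) (t : ℝ) : ℝ :=
  (Real.Gamma γ)⁻¹ * ∫ s in t..(1 : ℝ), (s - t) ^ (γ - 1) * v s

/-- Quantitative endpoint-vanishing estimate from the paper's Lemma A.4: if
`0 ≤ β < 1/2`, `γ > 0`, `γ + β > 1/2`, `v` is measurable and
`∫_t^1 (s-t)^(-2β) |v s|² ds ≤ M²` for every `t ∈ (0,1)`, then
`|(I_{1-}^γ v)(t)| ≤ (Γ(γ)·√(2γ+2β-1))⁻¹ (1-t)^(γ+β-1/2) M` on `(0,1)`;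
in particular `(I_{1-}^γ v)(t) → 0` as `t → 1⁻`. -/
theorem stmt_4 (β γ : ℝ) (hβ0 : 0 ≤ β) (hβ : β < 1 / 2) (hγ : 0 < γ)
    (hγβ : 1 / 2 < γ + β)
    (v : ℝ → ℝ) (hv : Measurable v) (M : ℝ) (hM : 0 ≤ M)
    (hint : ∀ t ∈ Set.Ioo (0 : ℝ) 1,
      IntegrableOn (fun s => (s - t) ^ (-(2 * β)) * (v s) ^ 2) (Set.Ioo t 1) ∧
      (∫ s in t..(1 : ℝ), (s - t) ^ (-(2 * β)) * (v s) ^ 2) ≤ M ^ 2) :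
    (∀ t ∈ Set.Ioo (0 : ℝ) 1,
      |rightFracInt γ v t| ≤
        (Real.Gamma γ * Real.sqrt (2 * γ + 2 * β - 1))⁻¹ * (1 - t) ^ (γ + β - 1 / 2) * M) ∧
    Filter.Tendsto (rightFracInt γ v) (nhdsWithin 1 (Set.Iio 1)) (nhds 0) := by
  have hΓ : 0 < Real.Gamma γ := Real.Gamma_pos_of_pos hγ
  have hr1 : (0:ℝ) < 2 * γ + 2 * β - 1 := by linarith
  have h2pow : ∀ x : ℝ, x ^ (2:ℝ) = x ^ 2 := fun x => by
    rw [show (2:ℝ) = ((2:ℕ):ℝ) by norm_num, Real.rpow_natCast]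
  have key : ∀ t ∈ Set.Ioo (0 : ℝ) 1,
      |rightFracInt γ v t| ≤
        (Real.Gamma γ * Real.sqrt (2 * γ + 2 * β - 1))⁻¹ * (1 - t) ^ (γ + β - 1 / 2) * M := by
    intro t ht
    obtain ⟨ht0, ht1⟩ := ht
    set μ := volume.restrict (Set.Ioo t 1) with hμ
    set f : ℝ → ℝ := fun s => (s - t) ^ (γ - 1 + β) with hfdef
    set g : ℝ → ℝ := fun s => (s - t) ^ (-β) * |v s| with hgdef
    have hae : ∀ᵐ s ∂μ, s ∈ Set.Ioo t 1 := ae_restrict_mem measurableSet_Ioo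
    have hfmeas : Measurable f := by rw [hfdef]; fun_prop
    have hgmeas : Measurable g := by rw [hgdef]; fun_prop
    have hfnn : 0 ≤ᵐ[μ] f := by
      filter_upwards [hae] with s hs
      exact Real.rpow_nonneg (by linarith [hs.1]) _
    have hgnn : 0 ≤ᵐ[μ] g := by
      filter_upwards [hae] with s hs
      exact mul_nonneg (Real.rpow_nonneg (by linarith [hs.1]) _) (abs_nonneg _)
    -- integrability of f^2
    have hf2int : IntegrableOn (fun s => (s - t) ^ (2 * γ + 2 * β - 2)) (Set.Ioo t 1) := by
      have h1 : IntervalIntegrable (fun x : ℝ => x ^ (2 * γ + 2 * β - 2)) volume 0 (1 - t) :=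
        intervalIntegral.intervalIntegrable_rpow' (by linarith)
      have h2 := h1.comp_sub_right t
      rw [zero_add, sub_add_cancel] at h2
      have h3 : IntegrableOn (fun s => (s - t) ^ (2 * γ + 2 * β - 2)) (Set.Ioc t 1) :=
        (intervalIntegrable_iff_integrableOn_Ioc_of_le (by linarith)).1 h2
      exact h3.mono_set Set.Ioo_subset_Ioc_self
    have hfsq_ae : ∀ᵐ s ∂μ, f s ^ 2 = (s - t) ^ (2 * γ + 2 * β - 2) := by
      filter_upwards [hae] with s hs
      have hst : (0:ℝ) < s - t := by linarith [hs.1]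
      rw [hfdef]
      simp only [sq, ← Real.rpow_add hst]
      rw [show γ - 1 + β + (γ - 1 + β) = 2 * γ + 2 * β - 2 by ring]
    have hfL2 : MemLp f 2 μ := by
      rw [memLp_two_iff_integrable_sq hfmeas.aestronglyMeasurable]
      exact (hf2int : Integrable _ μ).congr (Filter.EventuallyEq.symm hfsq_ae)
    have hg2e : ∀ᵐ s ∂μ, (s - t) ^ (-(2 * β)) * (v s) ^ 2 = g s ^ 2 := by
      filter_upwards [hae] with s hs
      have hst : (0:ℝ) < s - t := by linarith [hs.1]
      rw [hgdef]
      simp only [mul_pow, sq_abs]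
      rw [show ((s - t) ^ (-β)) ^ 2 = (s - t) ^ (-β) * (s - t) ^ (-β) from sq _,
        ← Real.rpow_add hst, show -β + -β = -(2 * β) by ring]
    have hg2int : Integrable (fun s => g s ^ 2) μ := ((hint t ⟨ht0, ht1⟩).1.congr hg2e)
    have hgL2 : MemLp g 2 μ := by
      rw [memLp_two_iff_integrable_sq hgmeas.aestronglyMeasurable]
      exact hg2int
    -- Hölder / Cauchy-Schwarz
    have hpq : Real.HolderConjugate 2 2 := Real.HolderConjugate.two_two
    have h2 : (ENNReal.ofReal (2:ℝ)) = 2 := by norm_num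
    have holder := integral_mul_le_Lp_mul_Lq_of_nonneg (μ := μ) hpq hfnn hgnn
      (h2 ▸ hfL2) (h2 ▸ hgL2)
    -- bound the original integral by ∫ f*g
    have habs : |∫ s in t..(1:ℝ), (s - t) ^ (γ - 1) * v s| ≤ ∫ s, f s * g s ∂μ := by
      rw [intervalIntegral.integral_of_le ht1.le, integral_Ioc_eq_integral_Ioo]
      calc |∫ s in Set.Ioo t 1, (s - t) ^ (γ - 1) * v s|
          ≤ ∫ s in Set.Ioo t 1, |(s - t) ^ (γ - 1)| * |v s| := by
            simpa [Real.norm_eq_abs] using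
              norm_integral_le_integral_norm (μ := volume.restrict (Set.Ioo t 1))
                (fun s => (s - t) ^ (γ - 1) * v s)
        _ = ∫ s, f s * g s ∂μ := by
            refine integral_congr_ae ?_
            filter_upwards [hae] with s hs
            have hst : (0:ℝ) < s - t := by linarith [hs.1]
            rw [abs_of_nonneg (Real.rpow_nonneg hst.le _), hfdef, hgdef,
              ← mul_assoc, ← Real.rpow_add hst, show γ - 1 + β + -β = γ - 1 by ring]
    -- compute ∫ f^2
    have hfsq : ∫ s, f s ^ (2:ℝ) ∂μ = (1 - t) ^ (2 * γ + 2 * β - 1) / (2 * γ + 2 * β - 1) := by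
      have e1 : ∫ s, f s ^ (2:ℝ) ∂μ = ∫ s in Set.Ioo t 1, (s - t) ^ (2 * γ + 2 * β - 2) := by
        refine integral_congr_ae ?_
        filter_upwards [hfsq_ae] with s hs
        rw [h2pow, hs]
      rw [e1, ← integral_Ioc_eq_integral_Ioo, ← intervalIntegral.integral_of_le ht1.le]
      have e2 : (∫ s in t..(1:ℝ), (s - t) ^ (2 * γ + 2 * β - 2))
          = ∫ x in (t - t)..(1 - t), x ^ (2 * γ + 2 * β - 2) :=
        intervalIntegral.integral_comp_sub_right (fun x => x ^ (2 * γ + 2 * β - 2)) t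
      rw [e2, sub_self, integral_rpow (Or.inl (by linarith))]
      rw [Real.zero_rpow (by linarith : 2 * γ + 2 * β - 2 + 1 ≠ 0)]
      ring_nf
    -- bound ∫ g^2
    have hgsq : ∫ s, g s ^ (2:ℝ) ∂μ ≤ M ^ 2 := by
      have e1 : ∫ s, g s ^ (2:ℝ) ∂μ = ∫ s in Set.Ioo t 1, (s - t) ^ (-(2 * β)) * (v s) ^ 2 := by
        refine integral_congr_ae ?_
        filter_upwards [hg2e] with s hs
        rw [h2pow, hs]
      rw [e1, ← integral_Ioc_eq_integral_Ioo, ← intervalIntegral.integral_of_le ht1.le]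
      exact (hint t ⟨ht0, ht1⟩).2
    have hgsqnn : 0 ≤ ∫ s, g s ^ (2:ℝ) ∂μ := by
      refine integral_nonneg_of_ae ?_
      filter_upwards [hgnn] with s hs
      exact Real.rpow_nonneg hs _
    have hY : (∫ s, g s ^ (2:ℝ) ∂μ) ^ ((1:ℝ)/2) ≤ M := by
      calc (∫ s, g s ^ (2:ℝ) ∂μ) ^ ((1:ℝ)/2)
          ≤ (M ^ 2) ^ ((1:ℝ)/2) := Real.rpow_le_rpow hgsqnn hgsq (by norm_num)
        _ = M := by
            rw [← Real.sqrt_eq_rpow, Real.sqrt_sq hM]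
    have hX : (∫ s, f s ^ (2:ℝ) ∂μ) ^ ((1:ℝ)/2)
        = (1 - t) ^ (γ + β - 1/2) / Real.sqrt (2 * γ + 2 * β - 1) := by
      rw [hfsq, ← Real.sqrt_eq_rpow,
        Real.sqrt_div (Real.rpow_nonneg (by linarith) _),
        Real.sqrt_eq_rpow ((1 - t) ^ (2 * γ + 2 * β - 1)),
        ← Real.rpow_mul (by linarith : (0:ℝ) ≤ 1 - t),
        show (2 * γ + 2 * β - 1) * (1 / 2) = γ + β - 1/2 by ring]
    have hXnn : (0:ℝ) ≤ (1 - t) ^ (γ + β - 1/2) / Real.sqrt (2 * γ + 2 * β - 1) :=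
      div_nonneg (Real.rpow_nonneg (by linarith) _) (Real.sqrt_nonneg _)
    have hfg : ∫ s, f s * g s ∂μ ≤
        ((1 - t) ^ (γ + β - 1/2) / Real.sqrt (2 * γ + 2 * β - 1)) * M := by
      calc ∫ s, f s * g s ∂μ
          ≤ (∫ s, f s ^ (2:ℝ) ∂μ) ^ ((1:ℝ)/2) * (∫ s, g s ^ (2:ℝ) ∂μ) ^ ((1:ℝ)/2) := holder
        _ ≤ ((1 - t) ^ (γ + β - 1/2) / Real.sqrt (2 * γ + 2 * β - 1)) * M := by
            rw [hX]
            exact mul_le_mul_of_nonneg_left hY hXnn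
    rw [rightFracInt, abs_mul, abs_of_pos (inv_pos.2 hΓ)]
    have := mul_le_mul_of_nonneg_left (le_trans habs hfg) (inv_pos.2 hΓ).le
    refine le_trans this (le_of_eq ?_)
    rw [mul_inv]
    have hs : Real.sqrt (2 * γ + 2 * β - 1) ≠ 0 := by positivity
    field_simp
  refine ⟨key, ?_⟩
  -- the bound function tends to 0
  have h1t : Filter.Tendsto (fun t : ℝ => 1 - t) (nhdsWithin 1 (Set.Iio 1)) (nhds 0) := by
    have : Filter.Tendsto (fun t : ℝ => 1 - t) (nhds 1) (nhds 0) := by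
      have := Filter.Tendsto.const_sub (1:ℝ) (Filter.tendsto_id (x := nhds (1:ℝ)))
      simpa using this
    exact this.mono_left nhdsWithin_le_nhds
  have hrpow : Filter.Tendsto (fun t : ℝ => (1 - t) ^ (γ + β - 1/2))
      (nhdsWithin 1 (Set.Iio 1)) (nhds 0) := by
    have hc : ContinuousAt (fun x : ℝ => x ^ (γ + β - 1/2)) 0 :=
      Real.continuousAt_rpow_const 0 _ (Or.inr (by linarith))
    have h0 : (0:ℝ) ^ (γ + β - 1/2) = 0 :=
      Real.zero_rpow (by intro h; rw [sub_eq_zero] at h; linarith [h])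
    have := hc.tendsto.comp h1t
    rw [h0] at this
    exact this
  have hbound : Filter.Tendsto
      (fun t : ℝ => (Real.Gamma γ * Real.sqrt (2 * γ + 2 * β - 1))⁻¹
        * (1 - t) ^ (γ + β - 1/2) * M)
      (nhdsWithin 1 (Set.Iio 1)) (nhds 0) := by
    have := (hrpow.const_mul ((Real.Gamma γ * Real.sqrt (2 * γ + 2 * β - 1))⁻¹)).mul_const M
    simpa using this
  refine squeeze_zero_norm' ?_ hbound
  have h01 : ∀ᶠ t in nhdsWithin (1:ℝ) (Set.Iio 1), t ∈ Set.Ioo (0:ℝ) 1 := by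
    filter_upwards [self_mem_nhdsWithin,
      (eventually_gt_nhds (show (0:ℝ) < 1 by norm_num)).filter_mono nhdsWithin_le_nhds]
      with t h1 h0
    exact ⟨h0, h1⟩
  filter_upwards [h01] with t ht
  simpa [Real.norm_eq_abs] using key t ht
end

section
/- Let 0 ≤ β < 1/2 < γ < 1 and let w : [0,1] → ℝ be continuous with finite Gagliardo H^γ(0,1) seminorm; set w̄ := ∫_0^1 w(t) dt. Then ∫_0^1 (w(t) − w(1))² (t^{−2β} + (1−t)^{−2β}) dt ≤ C ( ‖w − w̄‖²_{L²(0,1)} + ∫_0^1 ∫_0^1 |w(s)−w(t)|²/|s−t|^{1+2γ} ds dt ), where C depends only on β and γ. -/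
open MeasureTheory Set Filter

lemma sq_integral_le_cs {α : Type*} [MeasurableSpace α] (μ : Measure α) [IsFiniteMeasure μ]
    (f : α → ℝ) (hf : Integrable f μ) (hf2 : Integrable (fun x => f x ^ 2) μ) :
    (∫ x, f x ∂μ) ^ 2 ≤ (μ Set.univ).toReal * ∫ x, f x ^ 2 ∂μ := by
  have hm0 : 0 ≤ (μ Set.univ).toReal := ENNReal.toReal_nonneg
  rcases eq_or_lt_of_le hm0 with h0 | hpos
  · have hz : μ = 0 := by
      have : μ Set.univ = 0 := by
        have hfin : μ Set.univ ≠ ⊤ := measure_ne_top μ _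
        exact (ENNReal.toReal_eq_zero_iff _).mp h0.symm |>.resolve_right hfin
      exact Measure.measure_univ_eq_zero.mp this
    simp [hz]
  · set m := (μ Set.univ).toReal with hm
    set I := ∫ x, f x ∂μ with hI
    set Q := ∫ x, f x ^ 2 ∂μ with hQ
    set c := I / m with hc
    have key : 0 ≤ ∫ x, (f x - c) ^ 2 ∂μ := integral_nonneg (fun x => sq_nonneg _)
    have expand : ∫ x, (f x - c) ^ 2 ∂μ = Q - 2 * c * I + c ^ 2 * m := by
      have heq : (fun x => (f x - c) ^ 2)
          = fun x => (f x ^ 2 - (2 * c) * f x) + c ^ 2 := by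
        funext x; ring
      have i1 : Integrable (fun x => f x ^ 2 - 2 * c * f x) μ := by
        exact hf2.sub (hf.const_mul (2 * c))
      rw [heq, integral_add i1 (integrable_const _),
        integral_sub hf2 (hf.const_mul _), MeasureTheory.integral_const_mul, integral_const, measureReal_def]
      rw [← hI, ← hQ, ← hm]
      simp [smul_eq_mul]; ring
    rw [expand, hc] at key
    have h2 : I ^ 2 / m ≤ Q := by
      have e1 : 2 * (I / m) * I = 2 * (I ^ 2 / m) := by ring
      have e2 : (I / m) ^ 2 * m = I ^ 2 / m := by
        field_simp
      rw [e1, e2] at key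
      linarith
    calc I ^ 2 = (I ^ 2 / m) * m := by field_simp
    _ ≤ Q * m := mul_le_mul_of_nonneg_right h2 hm0
    _ = m * Q := mul_comm _ _

lemma endpoint_mem (x : ℝ) (hx : x ∈ Icc (0:ℝ) 1) (hnx : x ∉ Ioo (0:ℝ) 1) :
    x ∈ ({0, 1} : Set ℝ) := by
  rcases hx with ⟨h0, h1⟩
  rcases eq_or_lt_of_le h0 with h | h
  · exact Or.inl h.symm
  · exact Or.inr (le_antisymm h1 (le_of_not_gt (fun hc => hnx ⟨h, hc⟩)))

lemma icc_prod_ae_le_ioo (a b c d : ℝ) (h1 : Icc a b ⊆ Icc 0 1) (h2 : Icc c d ⊆ Icc 0 1) :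
    (Icc a b ×ˢ Icc c d : Set (ℝ × ℝ)) ≤ᵐ[volume] (Ioo 0 1 ×ˢ Ioo 0 1 : Set (ℝ × ℝ)) := by
  rw [ae_le_set]
  have hsub : (Icc a b ×ˢ Icc c d : Set (ℝ × ℝ)) \ (Ioo 0 1 ×ˢ Ioo 0 1)
      ⊆ (({0, 1} : Set ℝ) ×ˢ (univ : Set ℝ)) ∪ ((univ : Set ℝ) ×ˢ ({0, 1} : Set ℝ)) := by
    rintro ⟨s, t⟩ ⟨⟨hs, ht⟩, hn⟩
    by_cases h : s ∈ Ioo (0:ℝ) 1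
    · exact Or.inr ⟨trivial, endpoint_mem t (h2 ht) (fun ht'' => hn ⟨h, ht''⟩)⟩
    · exact Or.inl ⟨endpoint_mem s (h1 hs) h, trivial⟩
  refine measure_mono_null hsub ?_
  have hz : volume ({0, 1} : Set ℝ) = 0 :=
    ((Set.finite_singleton 1).insert 0).measure_zero volume
  refine measure_union_null ?_ ?_ <;> rw [Measure.volume_eq_prod, Measure.prod_prod] <;>
    simp [hz]

section
variable (γ : ℝ) (w : ℝ → ℝ)

noncomputable def Gag (p : ℝ × ℝ) : ℝ := (w p.1 - w p.2) ^ 2 / |p.1 - p.2| ^ (1 + 2 * γ)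

lemma gag_nonneg (p : ℝ × ℝ) : 0 ≤ Gag γ w p :=
  div_nonneg (sq_nonneg _) (Real.rpow_nonneg (abs_nonneg _) _)

lemma sq_le_gag (hγ1 : 1 / 2 < γ) {D : ℝ} (hD : 0 < D) {s t : ℝ} (hst : |s - t| ≤ D) :
    (w s - w t) ^ 2 ≤ D ^ (1 + 2 * γ) * Gag γ w (s, t) := by
  have hκ : (0:ℝ) ≤ 1 + 2 * γ := by linarith
  rcases eq_or_ne s t with h | h
  · simp [h, mul_nonneg (Real.rpow_nonneg hD.le _) (gag_nonneg γ w _)]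
  · have habs : 0 < |s - t| := abs_pos.mpr (sub_ne_zero.mpr h)
    have hpow : 0 < |s - t| ^ (1 + 2 * γ) := Real.rpow_pos_of_pos habs _
    have heq : (w s - w t) ^ 2 = Gag γ w (s, t) * |s - t| ^ (1 + 2 * γ) := by
      rw [Gag]; field_simp
    rw [heq, mul_comm]
    exact mul_le_mul_of_nonneg_right
      (Real.rpow_le_rpow (abs_nonneg _) hst hκ) (gag_nonneg γ w _)
end

section
variable {γ : ℝ} {w : ℝ → ℝ}

lemma avg_diff_sq_le (hγ1 : 1 / 2 < γ) (hw : ContinuousOn w (Icc 0 1))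
    (hG : IntegrableOn (Gag γ w) (Ioo 0 1 ×ˢ Ioo 0 1))
    {a b c d D : ℝ} (hab : a < b) (hcd : c < d)
    (h1 : Icc a b ⊆ Icc 0 1) (h2 : Icc c d ⊆ Icc 0 1)
    (hD : 0 < D) (hdist : ∀ s ∈ Icc a b, ∀ t ∈ Icc c d, |s - t| ≤ D) :
    ((b - a)⁻¹ * (∫ t in Icc a b, w t) - (d - c)⁻¹ * (∫ t in Icc c d, w t)) ^ 2
      ≤ D ^ (1 + 2 * γ) / ((b - a) * (d - c)) * ∫ p in Ioo 0 1 ×ˢ Ioo 0 1, Gag γ w p := by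
  set J := ∫ p in Ioo 0 1 ×ˢ Ioo 0 1, Gag γ w p with hJ
  have hJ0 : 0 ≤ J := setIntegral_nonneg (measurableSet_Ioo.prod measurableSet_Ioo)
    (fun p _ => gag_nonneg γ w p)
  set A : Set (ℝ × ℝ) := Icc a b ×ˢ Icc c d with hA
  have hAmeas : MeasurableSet A := measurableSet_Icc.prod measurableSet_Icc
  have hAcomp : IsCompact A := isCompact_Icc.prod isCompact_Icc
  have hae : A ≤ᵐ[volume] (Ioo 0 1 ×ˢ Ioo 0 1 : Set (ℝ × ℝ)) := icc_prod_ae_le_ioo a b c d h1 h2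
  have hw1 : ContinuousOn (fun p : ℝ × ℝ => w p.1) A :=
    hw.comp continuous_fst.continuousOn (fun p hp => h1 hp.1)
  have hw2 : ContinuousOn (fun p : ℝ × ℝ => w p.2) A :=
    hw.comp continuous_snd.continuousOn (fun p hp => h2 hp.2)
  have hFc : ContinuousOn (fun p : ℝ × ℝ => w p.1 - w p.2) A := hw1.sub hw2
  have hFint : IntegrableOn (fun p : ℝ × ℝ => w p.1 - w p.2) A volume :=
    hFc.integrableOn_compact hAcomp
  have hF2int : IntegrableOn (fun p : ℝ × ℝ => (w p.1 - w p.2) ^ 2) A volume :=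
    (hFc.pow 2).integrableOn_compact hAcomp
  have h1int : IntegrableOn (fun p : ℝ × ℝ => w p.1) A volume :=
    hw1.integrableOn_compact hAcomp
  have h2int : IntegrableOn (fun p : ℝ × ℝ => w p.2) A volume :=
    hw2.integrableOn_compact hAcomp
  have hGA : IntegrableOn (Gag γ w) A volume := hG.mono_set_ae hae
  set m := (b - a) * (d - c) with hm
  have hmpos : 0 < m := mul_pos (by linarith) (by linarith)
  have hvolA : volume A = ENNReal.ofReal (b - a) * ENNReal.ofReal (d - c) := by
    rw [hA, Measure.volume_eq_prod, Measure.prod_prod, Real.volume_Icc, Real.volume_Icc]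
  have hvolA' : (volume A).toReal = m := by
    rw [hvolA, ENNReal.toReal_mul, ENNReal.toReal_ofReal (by linarith),
      ENNReal.toReal_ofReal (by linarith), hm]
  -- Fubini-type identity
  have e1 : ∫ p in A, w p.1 = (∫ t in Icc a b, w t) * (d - c) := by
    rw [hA, Measure.volume_eq_prod, ← Measure.prod_restrict]
    have := integral_prod_mul (μ := volume.restrict (Icc a b)) (ν := volume.restrict (Icc c d))
      w (fun _ => (1 : ℝ))
    simpa [Real.volume_Icc, ENNReal.toReal_ofReal (by linarith : (0:ℝ) ≤ d - c), max_eq_left (by linarith : (0:ℝ) ≤ d - c)] using this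
  have e2 : ∫ p in A, w p.2 = (b - a) * ∫ t in Icc c d, w t := by
    rw [hA, Measure.volume_eq_prod, ← Measure.prod_restrict]
    have := integral_prod_mul (μ := volume.restrict (Icc a b)) (ν := volume.restrict (Icc c d))
      (fun _ => (1 : ℝ)) w
    simpa [Real.volume_Icc, ENNReal.toReal_ofReal (by linarith : (0:ℝ) ≤ b - a), max_eq_left (by linarith : (0:ℝ) ≤ b - a)] using this
  have key : ∫ p in A, (w p.1 - w p.2)
      = (d - c) * (∫ t in Icc a b, w t) - (b - a) * ∫ t in Icc c d, w t := by
    rw [integral_sub h1int h2int, e1, e2]; ring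
  have havg : (b - a)⁻¹ * (∫ t in Icc a b, w t) - (d - c)⁻¹ * (∫ t in Icc c d, w t)
      = m⁻¹ * ∫ p in A, (w p.1 - w p.2) := by
    have hba : b - a ≠ 0 := sub_ne_zero.mpr hab.ne'
    have hdc : d - c ≠ 0 := sub_ne_zero.mpr hcd.ne'
    rw [key, hm]; field_simp
  -- Cauchy–Schwarz
  haveI : IsFiniteMeasure (volume.restrict A) :=
    ⟨by rw [Measure.restrict_apply_univ]; exact hAcomp.measure_lt_top⟩
  have hcs : (∫ p in A, (w p.1 - w p.2)) ^ 2 ≤ m * ∫ p in A, (w p.1 - w p.2) ^ 2 := by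
    have := sq_integral_le_cs (volume.restrict A) (fun p : ℝ × ℝ => w p.1 - w p.2) hFint hF2int
    rwa [Measure.restrict_apply_univ, hvolA'] at this
  -- pointwise bound
  have hmono : ∫ p in A, (w p.1 - w p.2) ^ 2 ≤ D ^ (1 + 2 * γ) * ∫ p in A, Gag γ w p := by
    rw [← MeasureTheory.integral_const_mul]
    refine setIntegral_mono_on hF2int (hGA.const_mul _) hAmeas (fun p hp => ?_)
    have := sq_le_gag γ w hγ1 hD (hdist p.1 hp.1 p.2 hp.2)
    simpa using this
  have hsub : ∫ p in A, Gag γ w p ≤ J :=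
    setIntegral_mono_set hG (Filter.Eventually.of_forall (fun p => gag_nonneg γ w p)) hae
  have hDκ : (0:ℝ) ≤ D ^ (1 + 2 * γ) := Real.rpow_nonneg hD.le _
  have hGA0 : 0 ≤ ∫ p in A, Gag γ w p := setIntegral_nonneg hAmeas (fun p _ => gag_nonneg γ w p)
  rw [havg, mul_pow]
  have chain : (∫ p in A, (w p.1 - w p.2)) ^ 2 ≤ m * (D ^ (1 + 2 * γ) * J) := by
    calc (∫ p in A, (w p.1 - w p.2)) ^ 2 ≤ m * ∫ p in A, (w p.1 - w p.2) ^ 2 := hcs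
    _ ≤ m * (D ^ (1 + 2 * γ) * ∫ p in A, Gag γ w p) :=
        mul_le_mul_of_nonneg_left hmono hmpos.le
    _ ≤ m * (D ^ (1 + 2 * γ) * J) := by
        exact mul_le_mul_of_nonneg_left (mul_le_mul_of_nonneg_left hsub hDκ) hmpos.le
  calc m⁻¹ ^ 2 * (∫ p in A, (w p.1 - w p.2)) ^ 2
      ≤ m⁻¹ ^ 2 * (m * (D ^ (1 + 2 * γ) * J)) :=
        mul_le_mul_of_nonneg_left chain (by positivity)
  _ = D ^ (1 + 2 * γ) / m * J := by field_simp
end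

section
variable {γ : ℝ} {w : ℝ → ℝ}

lemma chaining (hγ1 : 1 / 2 < γ) (hγ2 : γ < 1) (hw : ContinuousOn w (Icc 0 1))
    (hG : IntegrableOn (Gag γ w) (Ioo 0 1 ×ˢ Ioo 0 1))
    {x : ℝ} (hx : x ∈ Icc (0:ℝ) 1) :
    (w x - ∫ t in Icc (0:ℝ) 1, w t) ^ 2
      ≤ (2 / (1 - (1/2 : ℝ) ^ (γ - 1/2)) ^ 2) * ∫ p in Ioo 0 1 ×ˢ Ioo 0 1, Gag γ w p := by
  set J := ∫ p in Ioo 0 1 ×ˢ Ioo 0 1, Gag γ w p with hJdef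
  have hJ0 : 0 ≤ J := setIntegral_nonneg (measurableSet_Ioo.prod measurableSet_Ioo)
    (fun p _ => gag_nonneg γ w p)
  set q : ℝ := (1/2 : ℝ) ^ (γ - 1/2) with hqdef
  have hq0 : 0 < q := Real.rpow_pos_of_pos (by norm_num) _
  have hq1 : q < 1 := Real.rpow_lt_one (by norm_num) (by norm_num) (by linarith)
  set S : ℝ := Real.sqrt (2 * J) with hSdef
  have hS0 : 0 ≤ S := Real.sqrt_nonneg _
  -- interval data
  set L : ℕ → ℝ := fun n => (1/2 : ℝ) ^ n with hLdef
  have hL0 : ∀ n, 0 < L n := fun n => pow_pos (by norm_num) n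
  have hLsucc : ∀ n, L (n + 1) = L n / 2 := by
    intro n; simp [hLdef, pow_succ]; ring
  set ℓ : ℕ → ℝ := fun n => if n = 0 then 0 else (if x ≤ 1/2 then x else x - L n) with hℓdef
  set I : ℕ → Set ℝ := fun n => Icc (ℓ n) (ℓ n + L n) with hIdef
  have hI0 : I 0 = Icc 0 1 := by simp [hIdef, hℓdef, hLdef]
  have hℓval : ∀ n : ℕ, n ≠ 0 → ℓ n = if x ≤ 1/2 then x else x - L n := by
    intro n hn; simp only [hℓdef]; rw [if_neg hn]
  have hmem : ∀ n, x ∈ I n := by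
    intro n
    rcases Nat.eq_zero_or_pos n with h | h
    · rw [h, hI0]; exact hx
    · show x ∈ Icc (ℓ n) (ℓ n + L n)
      rw [hℓval n h.ne', mem_Icc]
      by_cases hhalf : x ≤ 1/2 <;> [rw [if_pos hhalf]; rw [if_neg hhalf]] <;>
        constructor <;> linarith [(hL0 n).le]
  have hsub : ∀ n, I (n + 1) ⊆ I n := by
    intro n
    have h1 : L (n+1) ≤ L n := by rw [hLsucc n]; linarith [(hL0 n).le]
    show Icc (ℓ (n+1)) (ℓ (n+1) + L (n+1)) ⊆ I n
    rcases Nat.eq_zero_or_pos n with h | h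
    · subst h
      rw [hI0, hℓval (0+1) one_ne_zero]
      have hL1 : L (0+1) = 1/2 := by norm_num [hLdef]
      rw [hL1]
      rcases hx with ⟨hx0, hx1⟩
      by_cases hhalf : x ≤ 1/2 <;> [rw [if_pos hhalf]; rw [if_neg hhalf]] <;>
        exact Icc_subset_Icc (by linarith) (by linarith)
    · show Icc _ _ ⊆ Icc (ℓ n) (ℓ n + L n)
      rw [hℓval (n+1) (Nat.succ_ne_zero n), hℓval n h.ne']
      by_cases hhalf : x ≤ 1/2 <;> [rw [if_pos hhalf, if_pos hhalf]; rw [if_neg hhalf, if_neg hhalf]] <;>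
        exact Icc_subset_Icc (by linarith) (by linarith)
  have hIcc1 : ∀ n, I n ⊆ Icc 0 1 := by
    intro n
    induction n with
    | zero => rw [hI0]
    | succ k ih => exact (hsub k).trans ih
  -- averages
  set A : ℕ → ℝ := fun n => (L n)⁻¹ * ∫ t in I n, w t with hAdef
  have hInt : ∀ n, IntegrableOn w (I n) volume := fun n =>
    (hw.mono (hIcc1 n)).integrableOn_compact isCompact_Icc
  -- step estimate
  have hstep : ∀ n, |A n - A (n + 1)| ≤ S * q ^ n := by
    intro n
    have hab : ℓ n < ℓ n + L n := by linarith [hL0 n]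
    have hcd : ℓ (n+1) < ℓ (n+1) + L (n+1) := by linarith [hL0 (n+1)]
    have hdist : ∀ s ∈ I n, ∀ t ∈ I (n+1), |s - t| ≤ L n := by
      intro s hs t ht
      have ht' := hsub n ht
      rw [hIdef, mem_Icc] at hs ht'
      rw [abs_sub_le_iff]
      constructor <;> linarith [hs.1, hs.2, ht'.1, ht'.2]
    have key := avg_diff_sq_le hγ1 hw hG hab hcd (hIcc1 n) (hIcc1 (n+1)) (hL0 n) hdist
    have hba : ℓ n + L n - ℓ n = L n := by ring
    have hdc : ℓ (n+1) + L (n+1) - ℓ (n+1) = L (n+1) := by ring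
    rw [hba, hdc] at key
    have hrw : (L n) ^ (1 + 2*γ) / (L n * L (n+1)) = 2 * (L n) ^ (2*γ - 1) := by
      have hl := hL0 n
      have : (L n) ^ (1 + 2*γ) = (L n) ^ (2*γ - 1) * (L n) ^ (2:ℕ) := by
        rw [← Real.rpow_natCast (L n) 2, ← Real.rpow_add hl]
        congr 1
        push_cast
        ring
      rw [this, hLsucc n]
      field_simp
    rw [hrw] at key
    -- key : (A n - A (n+1))^2 ≤ 2 * L n ^ (2γ-1) * J
    have habs : |A n - A (n+1)| ≤ Real.sqrt (2 * (L n) ^ (2*γ - 1) * J) := by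
      rw [← Real.sqrt_sq_eq_abs]
      exact Real.sqrt_le_sqrt (by rw [mul_assoc] at key ⊢; exact key)
    refine habs.trans (le_of_eq ?_)
    have hln := (hL0 n).le
    have e1 : 2 * (L n) ^ (2*γ - 1) * J = (2 * J) * (L n) ^ (2*γ - 1) := by ring
    rw [e1, Real.sqrt_mul (by positivity), hSdef]
    congr 1
    rw [show (2*γ - 1) = (γ - 1/2) * 2 by ring, Real.rpow_mul hln,
      Real.rpow_two, Real.sqrt_sq (Real.rpow_nonneg hln _)]
    simp only [hLdef, hqdef]
    rw [← Real.rpow_natCast ((1/2:ℝ)) n, ← Real.rpow_mul (by norm_num), mul_comm,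
      Real.rpow_mul (by norm_num), Real.rpow_natCast]
  -- telescoping
  have htel : ∀ N, |A 0 - A N| ≤ S * ∑ n ∈ Finset.range N, q ^ n := by
    intro N
    induction N with
    | zero => simp
    | succ k ih =>
      calc |A 0 - A (k+1)| ≤ |A 0 - A k| + |A k - A (k+1)| := by
            have := abs_sub_le (A 0) (A k) (A (k+1)); linarith
      _ ≤ S * ∑ n ∈ Finset.range k, q ^ n + S * q ^ k := add_le_add ih (hstep k)
      _ = S * ∑ n ∈ Finset.range (k+1), q ^ n := by rw [Finset.sum_range_succ]; ring
  have hgeom : ∀ N, (∑ n ∈ Finset.range N, q ^ n) ≤ (1 - q)⁻¹ := by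
    intro N
    have hsummable : Summable (fun n => q ^ n) := summable_geometric_of_lt_one hq0.le hq1
    have := Summable.sum_le_tsum (Finset.range N) (fun n _ => (pow_pos hq0 n).le) hsummable
    rwa [tsum_geometric_of_lt_one hq0.le hq1] at this
  have hbound : ∀ N, |A 0 - A N| ≤ S * (1 - q)⁻¹ := fun N =>
    (htel N).trans (mul_le_mul_of_nonneg_left (hgeom N) hS0)
  -- limit : A N → w x
  have hlim : Tendsto A atTop (nhds (w x)) := by
    rw [Metric.tendsto_atTop]
    intro ε hε
    have hcont : ContinuousWithinAt w (Icc 0 1) x := hw x hx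
    rw [Metric.continuousWithinAt_iff] at hcont
    obtain ⟨δ, hδ0, hδ⟩ := hcont (ε/2) (by linarith)
    obtain ⟨N, hN⟩ := exists_pow_lt_of_lt_one hδ0 (by norm_num : (1/2:ℝ) < 1)
    refine ⟨N, fun n hn => ?_⟩
    have hLn : L n < δ := by
      have : L n ≤ L N := pow_le_pow_of_le_one (by norm_num) (by norm_num) hn
      exact lt_of_le_of_lt this hN
    have hclose : ∀ t ∈ I n, |w t - w x| ≤ ε/2 := by
      intro t ht
      have ht1 : t ∈ Icc (0:ℝ) 1 := hIcc1 n ht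
      have hxn := hmem n
      rw [hIdef, mem_Icc] at ht hxn
      have : dist t x < δ := by
        rw [Real.dist_eq, abs_sub_lt_iff]
        constructor <;> [linarith [ht.2, hxn.1]; linarith [ht.1, hxn.2]] <;> skip
      exact le_of_lt (by simpa [Real.dist_eq] using hδ ht1 this)
    have hvol : volume (I n) = ENNReal.ofReal (L n) := by
      rw [hIdef, Real.volume_Icc]; congr 1; ring
    have hintc : ∫ t in I n, (w x : ℝ) = L n * w x := by
      rw [setIntegral_const, measureReal_def, hvol, ENNReal.toReal_ofReal (hL0 n).le, smul_eq_mul]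
    have hkey : A n - w x = (L n)⁻¹ * ∫ t in I n, (w t - w x) := by
      rw [integral_sub (hInt n) (integrableOn_const (ne_of_lt ?_)), hintc, hAdef]
      · field_simp [(hL0 n).ne']
      · rw [hvol]; exact ENNReal.ofReal_lt_top
    have hbnd : |∫ t in I n, (w t - w x)| ≤ (ε/2) * L n := by
      have := norm_setIntegral_le_of_norm_le_const (μ := volume) (s := I n)
        (f := fun t => w t - w x) (C := ε/2)
        (by rw [hvol]; exact ENNReal.ofReal_lt_top)
        (fun t ht => by simpa [Real.norm_eq_abs] using hclose t ht)
      rw [measureReal_def, hvol, ENNReal.toReal_ofReal (hL0 n).le] at this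
      simpa [Real.norm_eq_abs] using this
    rw [Real.dist_eq, hkey, abs_mul, abs_inv, abs_of_pos (hL0 n)]
    calc (L n)⁻¹ * |∫ t in I n, (w t - w x)| ≤ (L n)⁻¹ * ((ε/2) * L n) := by
          exact mul_le_mul_of_nonneg_left hbnd (by positivity)
    _ = ε/2 := by field_simp [(hL0 n).ne']
    _ < ε := by linarith
  -- conclude
  have hA0 : A 0 = ∫ t in Icc (0:ℝ) 1, w t := by
    simp [hAdef, hI0, hLdef]
  have hfinal : |A 0 - w x| ≤ S * (1 - q)⁻¹ := by
    have htend : Tendsto (fun N => |A 0 - A N|) atTop (nhds (|A 0 - w x|)) :=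
      ((tendsto_const_nhds.sub hlim).abs)
    exact le_of_tendsto htend (Eventually.of_forall hbound)
  have hsq : (w x - ∫ t in Icc (0:ℝ) 1, w t) ^ 2 ≤ (S * (1 - q)⁻¹) ^ 2 := by
    rw [← hA0]
    have : (w x - A 0) ^ 2 = |A 0 - w x| ^ 2 := by rw [sq_abs]; ring
    rw [this]
    exact pow_le_pow_left₀ (abs_nonneg _) hfinal 2
  refine hsq.trans (le_of_eq ?_)
  rw [mul_pow, Real.sq_sqrt (by linarith), hqdef]
  field_simp
end

/-- Weighted Hardy-type endpoint inequality from the proof of the paper's Lemma 4.1: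
for `0 ≤ β < 1/2 < γ < 1` and `w` continuous on `[0,1]` with finite Gagliardo `H^γ(0,1)`
seminorm, with `w̄ = ∫_0^1 w`,
`∫_0^1 (w t - w 1)² (t^(-2β) + (1-t)^(-2β)) dt
  ≤ C (‖w - w̄‖²_{L²(0,1)} + ∫_0^1 ∫_0^1 |w s - w t|²/|s-t|^(1+2γ) ds dt)`,
where `C` depends only on `β` and `γ`. -/
theorem stmt_10 (β γ : ℝ) (hβ0 : 0 ≤ β) (hβ : β < 1 / 2) (hγ1 : 1 / 2 < γ) (hγ2 : γ < 1) :
    ∃ C : ℝ, 0 < C ∧ ∀ w : ℝ → ℝ,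
      ContinuousOn w (Set.Icc 0 1) →
      IntegrableOn (fun p : ℝ × ℝ => (w p.1 - w p.2) ^ 2 / |p.1 - p.2| ^ (1 + 2 * γ))
        (Set.Ioo 0 1 ×ˢ Set.Ioo 0 1) →
      (∫ t in Set.Ioo (0 : ℝ) 1,
          (w t - w 1) ^ 2 * (t ^ (-(2 * β)) + (1 - t) ^ (-(2 * β)))) ≤
        C * ((∫ t in Set.Ioo (0 : ℝ) 1, (w t - ∫ s in (0 : ℝ)..1, w s) ^ 2) +
          ∫ s in Set.Ioo (0 : ℝ) 1, ∫ t in Set.Ioo (0 : ℝ) 1,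
            (w s - w t) ^ 2 / |s - t| ^ (1 + 2 * γ)) := by
  set r : ℝ := -(2 * β) with hrdef
  have hr1 : (-1:ℝ) < r := by rw [hrdef]; linarith
  -- weight integrability
  have hint1 : IntegrableOn (fun t : ℝ => t ^ r) (Ioo 0 1) volume :=
    ((intervalIntegral.intervalIntegrable_rpow' hr1 (a := 0) (b := 1)).1).mono_set
      Ioo_subset_Ioc_self
  have hint2 : IntegrableOn (fun t : ℝ => (1 - t) ^ r) (Ioo 0 1) volume := by
    have h := (intervalIntegral.intervalIntegrable_rpow' hr1 (a := 0) (b := 1)).comp_sub_left 1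
    simp only [sub_zero, sub_self] at h
    have h2 := h.symm
    exact (h2.1).mono_set Ioo_subset_Ioc_self
  have hwInt : IntegrableOn (fun t : ℝ => t ^ r + (1 - t) ^ r) (Ioo 0 1) volume :=
    hint1.add hint2
  set W : ℝ := ∫ t in Ioo (0:ℝ) 1, (t ^ r + (1 - t) ^ r) with hWdef
  have hW0 : 0 ≤ W := setIntegral_nonneg measurableSet_Ioo (fun t ht =>
    add_nonneg (Real.rpow_nonneg ht.1.le r) (Real.rpow_nonneg (by linarith [ht.2]) r))
  set q : ℝ := (1/2 : ℝ) ^ (γ - 1/2) with hqdef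
  have hq0 : 0 < q := Real.rpow_pos_of_pos (by norm_num) _
  have hq1 : q < 1 := Real.rpow_lt_one (by norm_num) (by norm_num) (by linarith)
  set C₁ : ℝ := 2 / (1 - q) ^ 2 with hC₁def
  have hC₁pos : 0 < C₁ := by
    apply div_pos (by norm_num)
    have : 0 < 1 - q := by linarith
    positivity
  refine ⟨4 * C₁ * W + 1, by positivity, fun w hw hG => ?_⟩
  set J : ℝ := ∫ p in Ioo (0:ℝ) 1 ×ˢ Ioo (0:ℝ) 1, Gag γ w p with hJdef
  have hJ0 : 0 ≤ J := setIntegral_nonneg (measurableSet_Ioo.prod measurableSet_Ioo)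
    (fun p _ => gag_nonneg γ w p)
  have hG' : IntegrableOn (Gag γ w) (Ioo 0 1 ×ˢ Ioo 0 1) volume := hG
  -- the iterated integral equals J
  have hiter : (∫ s in Ioo (0:ℝ) 1, ∫ t in Ioo (0:ℝ) 1,
      (w s - w t) ^ 2 / |s - t| ^ (1 + 2 * γ)) = J := by
    have hGint : Integrable (Gag γ w)
        ((volume.restrict (Ioo (0:ℝ) 1)).prod (volume.restrict (Ioo (0:ℝ) 1))) := by
      rw [Measure.prod_restrict, ← Measure.volume_eq_prod]
      exact hG'
    have := integral_prod (Gag γ w) hGint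
    rw [Measure.prod_restrict, ← Measure.volume_eq_prod] at this
    rw [hJdef, this]
    rfl
  -- interval integral = Icc integral
  have hbar : (∫ s in (0:ℝ)..1, w s) = ∫ t in Icc (0:ℝ) 1, w t := by
    rw [intervalIntegral.integral_of_le (by norm_num : (0:ℝ) ≤ 1),
      ← integral_Icc_eq_integral_Ioc]
  -- pointwise bound
  set M : ℝ := ∫ t in Icc (0:ℝ) 1, w t with hMdef
  have hchain : ∀ x ∈ Icc (0:ℝ) 1, (w x - M) ^ 2 ≤ C₁ * J := fun x hx =>
    chaining hγ1 hγ2 hw hG' hx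
  have hpt : ∀ t ∈ Icc (0:ℝ) 1, (w t - w 1) ^ 2 ≤ 4 * C₁ * J := by
    intro t ht
    have h1 := hchain t ht
    have h2 := hchain 1 (by norm_num)
    nlinarith [sq_nonneg (w t + w 1 - 2 * M)]
  -- integral bound
  have hmono : (∫ t in Ioo (0:ℝ) 1, (w t - w 1) ^ 2 * (t ^ r + (1 - t) ^ r))
      ≤ ∫ t in Ioo (0:ℝ) 1, (4 * C₁ * J) * (t ^ r + (1 - t) ^ r) := by
    refine integral_mono_of_nonneg ?_ (hwInt.const_mul _) ?_
    · filter_upwards [ae_restrict_mem measurableSet_Ioo] with t ht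
      exact mul_nonneg (sq_nonneg _)
        (add_nonneg (Real.rpow_nonneg ht.1.le r) (Real.rpow_nonneg (by linarith [ht.2]) r))
    · filter_upwards [ae_restrict_mem measurableSet_Ioo] with t ht
      exact mul_le_mul_of_nonneg_right (hpt t ⟨ht.1.le, ht.2.le⟩)
        (add_nonneg (Real.rpow_nonneg ht.1.le r) (Real.rpow_nonneg (by linarith [ht.2]) r))
  have hval : (∫ t in Ioo (0:ℝ) 1, (4 * C₁ * J) * (t ^ r + (1 - t) ^ r)) = 4 * C₁ * J * W := by
    rw [MeasureTheory.integral_const_mul, hWdef]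
  have hL2 : 0 ≤ ∫ t in Ioo (0:ℝ) 1, (w t - ∫ s in (0:ℝ)..1, w s) ^ 2 :=
    setIntegral_nonneg measurableSet_Ioo (fun t _ => sq_nonneg _)
  calc (∫ t in Ioo (0:ℝ) 1, (w t - w 1) ^ 2 * (t ^ r + (1 - t) ^ r))
      ≤ 4 * C₁ * J * W := hmono.trans (le_of_eq hval)
  _ ≤ (4 * C₁ * W + 1) * ((∫ t in Ioo (0:ℝ) 1, (w t - ∫ s in (0:ℝ)..1, w s) ^ 2) + J) := by
      nlinarith [mul_nonneg (mul_nonneg (by linarith : (0:ℝ) ≤ 4 * C₁) hW0) hJ0,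
        mul_nonneg hC₁pos.le hL2, mul_nonneg (mul_nonneg hC₁pos.le hW0) hL2]
  _ = (4 * C₁ * W + 1) * ((∫ t in Ioo (0:ℝ) 1, (w t - ∫ s in (0:ℝ)..1, w s) ^ 2) +
        ∫ s in Ioo (0:ℝ) 1, ∫ t in Ioo (0:ℝ) 1, (w s - w t) ^ 2 / |s - t| ^ (1 + 2 * γ)) := by
      rw [hiter]
end
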